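/- Let G be a very well-covered graph (every maximal independent set has size |V(G)|/2) with odd-girth(G) ≥ 2k+1, k ≥ 3, and let e_1,...,e_s be edges of G with 1 ≤ s ≤ k-2. Let G' be the graph on V(G) whose edges are E(G) together with all pairs {u,v} of distinct vertices that are even-connected with respect to e_1⋯e_s. Then G' is very well-covered. -/

import Mathlib

/-- `s` is an independent set of `G`. -/
def IsIndepSet' {V : Type*} (G : SimpleGraph V) (s : Set V) : Prop :=
  s.Pairwise fun a b => ¬ G.Adj a b

/-- A finite graph is very well-covered if every maximal independent set has cardinality
half the number of vertices. -/
def VeryWellCovered {V : Type*} [Fintype V] (G : SimpleGraph V) : Prop :=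
  ∀ s : Set V, Maximal (IsIndepSet' G) s → s.ncard = Fintype.card V / 2

/-- Vertices `u` and `v` are even-connected with respect to the product of the edges in
the list `es`. -/
def EvenConnected {V : Type*} (G : SimpleGraph V) (es : List (Sym2 V)) (u v : V) : Prop :=
  ∃ (p : G.Walk u v) (l : ℕ), 1 ≤ l ∧ p.length = 2 * l + 1 ∧
    (↑(List.ofFn fun t : Fin l => s(p.getVert (2 * ↑t + 1), p.getVert (2 * ↑t + 2))) :
      Multiset (Sym2 V)) ≤ (↑es : Multiset (Sym2 V))

set_option linter.unusedSectionVars false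

namespace EvenConnProof

open SimpleGraph

section Indep
variable {V : Type*} [Fintype V] {G : SimpleGraph V}


open SimpleGraph

variable {V : Type*} [Fintype V] {G : SimpleGraph V}

/-- neighbors of a set -/
def nbrs (G : SimpleGraph V) (I : Set V) : Set V := {v | ∃ i ∈ I, G.Adj i v}

lemma indep_union {s t : Set V} (h1 : IsIndepSet' G s) (h2 : IsIndepSet' G t)
    (h12 : ∀ a ∈ s, ∀ b ∈ t, ¬ G.Adj a b) : IsIndepSet' G (s ∪ t) := by
  intro a ha b hb hne
  rcases ha with ha | ha <;> rcases hb with hb | hb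
  · exact h1 ha hb hne
  · exact h12 a ha b hb
  · exact fun h => h12 b hb a ha h.symm
  · exact h2 ha hb hne

lemma exists_maximal_ext (s : Set V) (hs : IsIndepSet' G s) :
    ∃ t, s ⊆ t ∧ Maximal (IsIndepSet' G) t := by
  obtain ⟨t, h1, h2⟩ := Finite.exists_le_maximal hs
  exact ⟨t, h1, h2⟩

lemma exists_maximal_ext_in (R s : Set V) (hs : IsIndepSet' G s) (hsR : s ⊆ R) :
    ∃ t, s ⊆ t ∧ Maximal (fun t => IsIndepSet' G t ∧ t ⊆ R) t := by
  obtain ⟨t, h1, h2⟩ :=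
    Finite.exists_le_maximal (p := fun t => IsIndepSet' G t ∧ t ⊆ R) ⟨hs, hsR⟩
  exact ⟨t, h1, h2⟩

lemma dominate {J : Set V} (hJ : Maximal (IsIndepSet' G) J) {v : V} (hv : v ∉ J) :
    ∃ j ∈ J, G.Adj v j := by
  by_contra h
  push_neg at h
  have hins : IsIndepSet' G (insert v J) := by
    intro a ha b hb hne
    rcases ha with rfl | ha <;> rcases hb with rfl | hb
    · exact absurd rfl hne
    · exact h b hb
    · exact fun hadj => h a ha hadj.symm
    · exact hJ.prop ha hb hne
  exact hv (hJ.2 hins (Set.subset_insert _ _) (Set.mem_insert _ _))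

lemma dominate_in {R J : Set V} (hJ : Maximal (fun t => IsIndepSet' G t ∧ t ⊆ R) J)
    {v : V} (hvR : v ∈ R) (hv : v ∉ J) : ∃ j ∈ J, G.Adj v j := by
  by_contra h
  push_neg at h
  have hins : IsIndepSet' G (insert v J) := by
    intro a ha b hb hne
    rcases ha with rfl | ha <;> rcases hb with rfl | hb
    · exact absurd rfl hne
    · exact h b hb
    · exact fun hadj => h a ha hadj.symm
    · exact hJ.prop.1 ha hb hne
  have : insert v J ⊆ J :=
    hJ.2 ⟨hins, Set.insert_subset hvR hJ.prop.2⟩ (Set.subset_insert _ _)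
  exact hv (this (Set.mem_insert _ _))

lemma indep_ncard_le {q : ℕ} (hwc : ∀ s : Set V, Maximal (IsIndepSet' G) s → s.ncard = q)
    {s : Set V} (hs : IsIndepSet' G s) : s.ncard ≤ q := by
  obtain ⟨t, hst, ht⟩ := exists_maximal_ext s hs
  exact (hwc t ht) ▸ Set.ncard_le_ncard hst (Set.toFinite t)

/-- Berge's quasi-regularizability for well-covered graphs. -/
lemma berge {q : ℕ} (hiso : ∀ v : V, ∃ w, G.Adj v w)
    (hwc : ∀ s : Set V, Maximal (IsIndepSet' G) s → s.ncard = q) :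
    ∀ (c : ℕ) (I : Set V), IsIndepSet' G I → I.ncard = c → c ≤ (nbrs G I).ncard := by
  classical
  intro c
  induction c using Nat.strong_induction_on with
  | _ c IH =>
  intro I hI hIc
  by_contra hcon
  push_neg at hcon
  have hc1 : 1 ≤ c := by omega
  have hInonempty : I.Nonempty := by
    rw [← Set.ncard_pos (Set.toFinite I)] at *; omega
  obtain ⟨i₀, hi₀⟩ := hInonempty
  set D : Set V := nbrs G I with hD
  set I' : Set V := I \ {i₀} with hI'def
  have hI'I : I' ⊆ I := Set.diff_subset
  have hI'ind : IsIndepSet' G I' := hI.mono hI'I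
  have hI'c : I'.ncard = c - 1 := by
    rw [hI'def, Set.ncard_diff_singleton_of_mem hi₀, hIc]
  have hID : ∀ x ∈ I, x ∉ D := by
    intro x hxI hxD
    obtain ⟨i, hiI, hadj⟩ := hxD
    exact hI hiI hxI hadj.ne hadj
  have hsubnbrs : nbrs G I' ⊆ D := by
    rintro v ⟨i, hiI, hadj⟩; exact ⟨i, hI'I hiI, hadj⟩
  have hDc : D.ncard = c - 1 := by
    have h1 : c - 1 ≤ (nbrs G I').ncard := IH (c-1) (by omega) I' hI'ind hI'c
    have h2 : (nbrs G I').ncard ≤ D.ncard :=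
      Set.ncard_le_ncard hsubnbrs (Set.toFinite D)
    omega
  -- Hall's theorem to get a matching from I' onto D
  haveI : Fintype ↥I' := (Set.toFinite I').fintype
  set r : ↥I' → Finset V := fun x => (Set.toFinite {v | G.Adj ↑x v}).toFinset with hr
  have hall : ∀ A : Finset ↥I', A.card ≤ (A.biUnion r).card := by
    intro A
    set SA : Set V := ↑(A.image Subtype.val) with hSA
    have hSAI : SA ⊆ I' := by
      intro v hv
      simp only [hSA, Finset.coe_image, Set.mem_image, Finset.mem_coe] at hv
      obtain ⟨x, _, rfl⟩ := hv; exact x.2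
    have hSAcard : SA.ncard = A.card := by
      rw [hSA, Set.ncard_coe_finset,
        Finset.card_image_of_injective _ Subtype.val_injective]
    have hlt : SA.ncard < c := by
      have := Set.ncard_le_ncard hSAI (Set.toFinite I'); omega
    have hle := IH SA.ncard hlt SA (hI.mono (hSAI.trans hI'I)) rfl
    have heq : nbrs G SA = ↑(A.biUnion r) := by
      ext v
      simp only [nbrs, Set.mem_setOf_eq, Finset.coe_biUnion, Set.mem_iUnion,
        Finset.mem_coe, Finset.mem_biUnion]
      constructor
      · rintro ⟨i, hiSA, hadj⟩
        simp only [hSA, Finset.coe_image, Set.mem_image, Finset.mem_coe] at hiSA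
        obtain ⟨x, hxA, rfl⟩ := hiSA
        exact ⟨x, hxA, by simp [hr, hadj]⟩
      · rintro ⟨x, hxA, hv⟩
        refine ⟨↑x, ?_, ?_⟩
        · simp only [hSA, Finset.coe_image, Set.mem_image, Finset.mem_coe]
          exact ⟨x, hxA, rfl⟩
        · simpa only [hr, Set.Finite.mem_toFinset, Set.mem_setOf_eq] using hv
    calc A.card = SA.ncard := hSAcard.symm
      _ ≤ (nbrs G SA).ncard := hle
      _ = (↑(A.biUnion r) : Set V).ncard := by rw [heq]
      _ = (A.biUnion r).card := Set.ncard_coe_finset _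
  obtain ⟨f, hfinj, hfr⟩ := (Finset.all_card_le_biUnion_card_iff_exists_injective r).mp hall
  have hfadj : ∀ x : ↥I', G.Adj ↑x (f x) := by
    intro x
    have := hfr x
    simpa only [hr, Set.Finite.mem_toFinset, Set.mem_setOf_eq] using this
  have hfD : ∀ x : ↥I', f x ∈ D := fun x => ⟨↑x, hI'I x.2, hfadj x⟩
  -- surjectivity of f onto D
  have hsurj : ∀ d ∈ D, ∃ x : ↥I', f x = d := by
    have hcard1 : (Finset.univ.image f).card = c - 1 := by
      rw [Finset.card_image_of_injective _ hfinj, Finset.card_univ]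
      have : Nat.card ↥I' = I'.ncard := Nat.card_coe_set_eq I'
      rw [← Nat.card_eq_fintype_card, this, hI'c]
    have hsub : Finset.univ.image f ⊆ D.toFinset := by
      intro d hd
      obtain ⟨x, _, rfl⟩ := Finset.mem_image.mp hd
      exact Set.mem_toFinset.mpr (hfD x)
    have hDf : D.toFinset.card = c - 1 := by
      rw [← Set.ncard_eq_toFinset_card', hDc]
    have : D.toFinset ⊆ Finset.univ.image f :=
      Finset.eq_of_subset_of_card_le hsub (by omega) ▸ Finset.Subset.refl _
    intro d hd
    obtain ⟨x, _, hx⟩ := Finset.mem_image.mp (this (Set.mem_toFinset.mpr hd))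
    exact ⟨x, hx⟩
  obtain ⟨dstar, hdstar⟩ := hiso i₀
  have hdstarD : dstar ∈ D := ⟨i₀, hi₀, hdstar⟩
  -- maximal independent X within D containing dstar
  obtain ⟨X, hdX, hXmax⟩ := exists_maximal_ext_in D {dstar}
    (Set.pairwise_singleton _ _) (Set.singleton_subset_iff.mpr hdstarD)
  have hXind : IsIndepSet' G X := hXmax.prop.1
  have hXD : X ⊆ D := hXmax.prop.2
  have hdstarX : dstar ∈ X := hdX rfl
  -- W : maximal independent extension of X ∪ (I \ nbrs G X)
  have hbase : IsIndepSet' G (X ∪ (I \ nbrs G X)) := by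
    refine indep_union hXind (hI.mono Set.diff_subset) ?_
    intro a ha b hb hadj
    exact hb.2 ⟨a, ha, hadj⟩
  obtain ⟨W, hbW, hWmax⟩ := exists_maximal_ext _ hbase
  have hWq := hwc W hWmax
  have hWD : W ∩ D = X := by
    apply Set.Subset.antisymm
    · rintro d ⟨hdW, hdD⟩
      by_contra hdXn
      obtain ⟨x, hxX, hadj⟩ := dominate_in hXmax hdD hdXn
      have hxW : x ∈ W := hbW (Or.inl hxX)
      exact hWmax.prop hdW hxW hadj.ne hadj
    · intro x hx
      exact ⟨hbW (Or.inl hx), hXD hx⟩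
  have hWI : W ∩ I = I \ nbrs G X := by
    apply Set.Subset.antisymm
    · rintro v ⟨hvW, hvI⟩
      refine ⟨hvI, ?_⟩
      rintro ⟨x, hxX, hadj⟩
      have hxW : x ∈ W := hbW (Or.inl hxX)
      exact hWmax.prop hxW hvW hadj.ne hadj
    · intro v hv
      exact ⟨hbW (Or.inr hv), hv.1⟩
  -- the part of W outside I ∪ D
  set W₃ : Set V := W \ (I ∪ D) with hW₃def
  have hWsplit : W = (W ∩ I) ∪ (W ∩ D) ∪ W₃ := by
    ext v
    simp only [hW₃def, Set.mem_union, Set.mem_inter_iff, Set.mem_diff]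
    tauto
  have hIDdisj : ∀ x, x ∈ I → x ∈ D → False := fun x h1 h2 => hID x h1 h2
  have hd2 : Disjoint (W ∩ I) (W ∩ D) := by
    rw [Set.disjoint_left]
    rintro v ⟨_, hvI⟩ ⟨_, hvD⟩
    exact hIDdisj v hvI hvD
  have hd1 : Disjoint ((W ∩ I) ∪ (W ∩ D)) W₃ := by
    rw [Set.disjoint_left]
    rintro v hv hv3
    exact hv3.2 (by rcases hv with ⟨_, h⟩ | ⟨_, h⟩; exacts [Or.inl h, Or.inr h])
  have hcard_split : W.ncard = (W ∩ I).ncard + (W ∩ D).ncard + W₃.ncard := by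
    calc W.ncard = (((W ∩ I) ∪ (W ∩ D)) ∪ W₃).ncard := by rw [← hWsplit]
      _ = ((W ∩ I) ∪ (W ∩ D)).ncard + W₃.ncard :=
          Set.ncard_union_eq hd1 (Set.toFinite _) (Set.toFinite _)
      _ = (W ∩ I).ncard + (W ∩ D).ncard + W₃.ncard := by
          rw [Set.ncard_union_eq hd2 (Set.toFinite _) (Set.toFinite _)]
  -- bound on W₃
  have hW3 : W₃.ncard + c ≤ q := by
    have hW₃Vc : ∀ v ∈ W₃, v ∉ I ∧ v ∉ D := by
      intro v hv
      exact ⟨fun h => hv.2 (Or.inl h), fun h => hv.2 (Or.inr h)⟩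
    set Vc : Set V := {v | v ∉ I ∧ v ∉ D} with hVc
    obtain ⟨J₄, hWJ₄, hJ₄max⟩ := exists_maximal_ext_in Vc W₃
      (hWmax.prop.mono Set.diff_subset) (fun v hv => hW₃Vc v hv)
    have hIJ₄ : IsIndepSet' G (I ∪ J₄) := by
      refine indep_union hI hJ₄max.prop.1 ?_
      intro a ha b hb hadj
      exact (hJ₄max.prop.2 hb).2 ⟨a, ha, hadj⟩
    have hIJ₄max : Maximal (IsIndepSet' G) (I ∪ J₄) := by
      constructor
      · exact hIJ₄
      · intro t ht hsub v hv
        by_contra hvn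
        have hvI : v ∉ I := fun h => hvn (Or.inl h)
        have hvJ₄ : v ∉ J₄ := fun h => hvn (Or.inr h)
        by_cases hvD : v ∈ D
        · obtain ⟨i, hiI, hadj⟩ := hvD
          exact ht (hsub (Or.inl hiI)) hv hadj.ne hadj
        · obtain ⟨j, hjJ, hadj⟩ := dominate_in hJ₄max ⟨hvI, hvD⟩ hvJ₄
          exact ht hv (hsub (Or.inr hjJ)) hadj.ne hadj
    have hq2 := hwc _ hIJ₄max
    have hdisj : Disjoint I J₄ := by
      rw [Set.disjoint_left]
      intro a haI haJ
      exact (hJ₄max.prop.2 haJ).1 haI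
    rw [Set.ncard_union_eq hdisj (Set.toFinite _) (Set.toFinite _), hIc] at hq2
    have := Set.ncard_le_ncard hWJ₄ (Set.toFinite J₄)
    omega
  -- key upper bound : |nbrs X ∩ I| ≤ |X|
  have hIsplit : (I \ nbrs G X).ncard + (nbrs G X ∩ I).ncard = c := by
    have heqI : I = (I \ nbrs G X) ∪ (nbrs G X ∩ I) := by
      ext v; simp only [Set.mem_union, Set.mem_diff, Set.mem_inter_iff]; tauto
    have hdd : Disjoint (I \ nbrs G X) (nbrs G X ∩ I) := by
      rw [Set.disjoint_left]
      rintro v ⟨_, hvn⟩ ⟨hvn2, _⟩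
      exact hvn hvn2
    calc (I \ nbrs G X).ncard + (nbrs G X ∩ I).ncard
        = ((I \ nbrs G X) ∪ (nbrs G X ∩ I)).ncard :=
          (Set.ncard_union_eq hdd (Set.toFinite _) (Set.toFinite _)).symm
      _ = I.ncard := by rw [← heqI]
      _ = c := hIc
  have hupper : (nbrs G X ∩ I).ncard ≤ X.ncard := by
    rw [hWI, hWD] at hcard_split
    rw [hWq] at hcard_split
    omega
  -- key lower bound : |X| + 1 ≤ |nbrs X ∩ I|
  have hlower : X.ncard + 1 ≤ (nbrs G X ∩ I).ncard := by
    set F : V → V := fun d => if h : ∃ x : ↥I', f x = d then ↑h.choose else d with hF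
    have hFprop : ∀ d ∈ X, (F d ∈ I' ∧ G.Adj (F d) d) := by
      intro d hdX
      have hex : ∃ x : ↥I', f x = d := hsurj d (hXD hdX)
      have hch := hex.choose_spec
      constructor
      · simp only [hF, dif_pos hex]; exact hex.choose.2
      · simp only [hF, dif_pos hex]
        have := hfadj hex.choose
        rw [hch] at this
        exact this
    have hinjF : Set.InjOn F X := by
      intro d₁ h₁ d₂ h₂ heq
      have hex₁ : ∃ x : ↥I', f x = d₁ := hsurj d₁ (hXD h₁)
      have hex₂ : ∃ x : ↥I', f x = d₂ := hsurj d₂ (hXD h₂)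
      simp only [hF, dif_pos hex₁, dif_pos hex₂] at heq
      have : hex₁.choose = hex₂.choose := Subtype.ext heq
      rw [← hex₁.choose_spec, ← hex₂.choose_spec, this]
    have hsub : insert i₀ (F '' X) ⊆ nbrs G X ∩ I := by
      rintro v (rfl | ⟨d, hdX, rfl⟩)
      · exact ⟨⟨dstar, hdstarX, hdstar.symm⟩, hi₀⟩
      · exact ⟨⟨d, hdX, (hFprop d hdX).2.symm⟩, hI'I (hFprop d hdX).1⟩
    have hi₀img : i₀ ∉ F '' X := by
      rintro ⟨d, hdX, hFd⟩
      exact (hFprop d hdX).1.2 (hFd ▸ rfl)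
    have h1 : (insert i₀ (F '' X)).ncard = X.ncard + 1 := by
      rw [Set.ncard_insert_of_notMem hi₀img (Set.toFinite _),
        Set.ncard_image_of_injOn hinjF]
    calc X.ncard + 1 = (insert i₀ (F '' X)).ncard := h1.symm
      _ ≤ (nbrs G X ∩ I).ncard := Set.ncard_le_ncard hsub (Set.toFinite _)
  omega

lemma hall_from_berge (hb : ∀ I : Set V, IsIndepSet' G I → I.ncard ≤ (nbrs G I).ncard)
    (S : Set V) (hS : IsIndepSet' G S) [Fintype ↥S] :
    ∃ f : ↥S → V, Function.Injective f ∧ ∀ x : ↥S, G.Adj ↑x (f x) := by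
  classical
  set r : ↥S → Finset V := fun x => (Set.toFinite {v | G.Adj ↑x v}).toFinset with hr
  have hall : ∀ A : Finset ↥S, A.card ≤ (A.biUnion r).card := by
    intro A
    set SA : Set V := ↑(A.image Subtype.val) with hSA
    have hSAI : SA ⊆ S := by
      intro v hv
      simp only [hSA, Finset.coe_image, Set.mem_image, Finset.mem_coe] at hv
      obtain ⟨x, _, rfl⟩ := hv; exact x.2
    have hSAcard : SA.ncard = A.card := by
      rw [hSA, Set.ncard_coe_finset,
        Finset.card_image_of_injective _ Subtype.val_injective]
    have hle := hb SA (hS.mono hSAI)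
    have heq : nbrs G SA = ↑(A.biUnion r) := by
      ext v
      simp only [nbrs, Set.mem_setOf_eq, Finset.coe_biUnion, Set.mem_iUnion,
        Finset.mem_coe, Finset.mem_biUnion]
      constructor
      · rintro ⟨i, hiSA, hadj⟩
        simp only [hSA, Finset.coe_image, Set.mem_image, Finset.mem_coe] at hiSA
        obtain ⟨x, hxA, rfl⟩ := hiSA
        exact ⟨x, hxA, by simp [hr, hadj]⟩
      · rintro ⟨x, hxA, hv⟩
        refine ⟨↑x, ?_, ?_⟩
        · simp only [hSA, Finset.coe_image, Set.mem_image, Finset.mem_coe]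
          exact ⟨x, hxA, rfl⟩
        · simpa only [hr, Set.Finite.mem_toFinset, Set.mem_setOf_eq] using hv
    calc A.card = SA.ncard := hSAcard.symm
      _ ≤ (nbrs G SA).ncard := hle
      _ = (↑(A.biUnion r) : Set V).ncard := by rw [heq]
      _ = (A.biUnion r).card := Set.ncard_coe_finset _
  obtain ⟨f, hfinj, hfr⟩ := (Finset.all_card_le_biUnion_card_iff_exists_injective r).mp hall
  refine ⟨f, hfinj, fun x => ?_⟩
  have := hfr x
  simpa only [hr, Set.Finite.mem_toFinset, Set.mem_setOf_eq] using this

/-- a very well covered graph has a perfect matching -/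
lemma exists_matching {q : ℕ} (hiso : ∀ v : V, ∃ w, G.Adj v w)
    (hwc : ∀ s : Set V, Maximal (IsIndepSet' G) s → s.ncard = q)
    (hq2 : Fintype.card V = 2 * q) :
    ∃ M : V → V, (∀ v, G.Adj v (M v)) ∧ (∀ v, M (M v) = v) := by
  classical
  obtain ⟨S₀, -, hS₀⟩ := exists_maximal_ext (G := G) ∅ (Set.pairwise_empty _)
  have hS₀q : S₀.ncard = q := hwc S₀ hS₀
  haveI : Fintype ↥S₀ := (Set.toFinite S₀).fintype
  have hb : ∀ I : Set V, IsIndepSet' G I → I.ncard ≤ (nbrs G I).ncard :=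
    fun I hI => berge hiso hwc I.ncard I hI rfl
  obtain ⟨f, hfinj, hfadj⟩ := hall_from_berge hb S₀ hS₀.prop
  have hfout : ∀ x : ↥S₀, f x ∉ S₀ := by
    intro x hmem
    exact hS₀.prop x.2 hmem (hfadj x).ne (hfadj x)
  have hsurj : ∀ v : V, v ∉ S₀ → ∃ x : ↥S₀, f x = v := by
    have hcard1 : (Finset.univ.image f).card = q := by
      rw [Finset.card_image_of_injective _ hfinj, Finset.card_univ]
      rw [← Nat.card_eq_fintype_card, Nat.card_coe_set_eq, hS₀q]
    have hsub : Finset.univ.image f ⊆ Finset.univ \ S₀.toFinset := by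
      intro d hd
      obtain ⟨x, -, rfl⟩ := Finset.mem_image.mp hd
      simp only [Finset.mem_sdiff, Finset.mem_univ, true_and, Set.mem_toFinset]
      exact hfout x
    have hT : (Finset.univ \ S₀.toFinset).card = q := by
      rw [Finset.card_sdiff_of_subset (Finset.subset_univ _), Finset.card_univ, hq2,
        ← Set.ncard_eq_toFinset_card', hS₀q]
      omega
    have heq : Finset.univ \ S₀.toFinset ⊆ Finset.univ.image f :=
      (Finset.eq_of_subset_of_card_le hsub (by omega)) ▸ Finset.Subset.refl _
    intro v hv
    have : v ∈ Finset.univ \ S₀.toFinset := by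
      simp only [Finset.mem_sdiff, Finset.mem_univ, true_and, Set.mem_toFinset]
      exact hv
    obtain ⟨x, -, hx⟩ := Finset.mem_image.mp (heq this)
    exact ⟨x, hx⟩
  set M : V → V := fun v =>
    if h : v ∈ S₀ then f ⟨v, h⟩ else ↑((hsurj v h).choose) with hM
  have hMadj : ∀ v, G.Adj v (M v) := by
    intro v
    by_cases h : v ∈ S₀
    · simp only [hM, dif_pos h]; exact hfadj ⟨v, h⟩
    · simp only [hM, dif_neg h]
      have := hfadj (hsurj v h).choose
      rw [(hsurj v h).choose_spec] at this
      exact this.symm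
  refine ⟨M, hMadj, fun v => ?_⟩
  by_cases h : v ∈ S₀
  · have h1 : M v = f ⟨v, h⟩ := by simp only [hM, dif_pos h]
    have h2 : M v ∉ S₀ := h1 ▸ hfout ⟨v, h⟩
    have h3 : M (M v) = ↑((hsurj (M v) h2).choose) := dif_neg h2
    have h4 : f ((hsurj (M v) h2).choose) = M v := (hsurj (M v) h2).choose_spec
    have h5 : f ((hsurj (M v) h2).choose) = f ⟨v, h⟩ := h4.trans h1
    have h6 := hfinj h5
    rw [h3, h6]
  · have h1 : M v = ↑((hsurj v h).choose) := by simp only [hM, dif_neg h]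
    have h2 : M v ∈ S₀ := h1 ▸ ((hsurj v h).choose).2
    have h3 : M (M v) = f ⟨M v, h2⟩ := dif_pos h2
    have h4 : (⟨M v, h2⟩ : ↥S₀) = (hsurj v h).choose := Subtype.ext h1
    rw [h3, h4, (hsurj v h).choose_spec]

/-- property (P2) holds for any perfect matching of a very well covered graph -/
lemma matching_P2 {q : ℕ}
    (hwc : ∀ s : Set V, Maximal (IsIndepSet' G) s → s.ncard = q)
    (hq2 : Fintype.card V = 2 * q) {M : V → V}
    (hM1 : ∀ v, G.Adj v (M v)) (hM2 : ∀ v, M (M v) = v) :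
    ∀ x a b, G.Adj a x → G.Adj b (M x) → a ≠ b → G.Adj a b := by
  classical
  intro x a b hax hbx hne
  by_contra hnadj
  have hpair : IsIndepSet' G {a, b} := by
    intro u hu v hv huv
    rcases hu with rfl | hu <;> rcases hv with rfl | hv
    · exact absurd rfl huv
    · rw [Set.mem_singleton_iff] at hv; subst hv; exact hnadj
    · rw [Set.mem_singleton_iff] at hu; subst hu
      exact fun h => hnadj h.symm
    · rw [Set.mem_singleton_iff] at hu hv; subst hu; subst hv; exact absurd rfl huv
  obtain ⟨J, hJsub, hJmax⟩ := exists_maximal_ext _ hpair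
  have haJ : a ∈ J := hJsub (Or.inl rfl)
  have hbJ : b ∈ J := hJsub (Or.inr rfl)
  have hJq : J.ncard = q := hwc J hJmax
  have hxJ : x ∉ J := fun hxJ => hJmax.prop haJ hxJ hax.ne hax
  have hMxJ : M x ∉ J := fun h => hJmax.prop hbJ h hbx.ne hbx
  have hMinj : Function.Injective M := by
    intro u v h
    rw [← hM2 u, h, hM2]
  set Jf := J.toFinset with hJf
  set Mf := Jf.image M with hMf
  have hJfq : Jf.card = q := by rw [hJf, ← Set.ncard_eq_toFinset_card', hJq]
  have hMfq : Mf.card = q := by rw [hMf, Finset.card_image_of_injective _ hMinj, hJfq]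
  have hdisj : Disjoint Jf Mf := by
    rw [Finset.disjoint_left]
    intro j hj hjM
    obtain ⟨j', hj', hj'eq⟩ := Finset.mem_image.mp hjM
    rw [hJf, Set.mem_toFinset] at hj hj'
    have hne' : j' ≠ j := hj'eq ▸ (hM1 j').ne
    exact hJmax.prop hj' hj hne' (hj'eq ▸ hM1 j')
  have hxU : x ∉ Jf ∪ Mf := by
    rw [Finset.mem_union]
    rintro (h | h)
    · exact hxJ (Set.mem_toFinset.mp h)
    · obtain ⟨j, hj, hjeq⟩ := Finset.mem_image.mp h
      have : j = M x := by rw [← hM2 j, hjeq]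
      rw [this] at hj
      exact hMxJ (Set.mem_toFinset.mp hj)
  have hMxU : M x ∉ Jf ∪ Mf := by
    rw [Finset.mem_union]
    rintro (h | h)
    · exact hMxJ (Set.mem_toFinset.mp h)
    · obtain ⟨j, hj, hjeq⟩ := Finset.mem_image.mp h
      have : j = x := hMinj hjeq
      rw [this] at hj
      exact hxJ (Set.mem_toFinset.mp hj)
  have hxMx : x ≠ M x := (hM1 x).ne
  have hbig : (insert x (insert (M x) (Jf ∪ Mf))).card = 2 * q + 2 := by
    rw [Finset.card_insert_of_notMem, Finset.card_insert_of_notMem hMxU,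
      Finset.card_union_of_disjoint hdisj, hJfq, hMfq]
    · ring
    · rw [Finset.mem_insert]
      rintro (h | h)
      · exact hxMx h
      · exact hxU h
  have : (insert x (insert (M x) (Jf ∪ Mf))).card ≤ Fintype.card V :=
    (Finset.card_le_univ _).trans (le_of_eq (Finset.card_univ))
  omega

/-- counting: a set containing exactly one endpoint of each matching edge has size q -/
lemma half_count {q : ℕ} (hq2 : Fintype.card V = 2 * q) {M : V → V}
    (hM1 : ∀ v, G.Adj v (M v)) (hM2 : ∀ v, M (M v) = v) (S : Set V)
    (hSind : IsIndepSet' G S) (hcover : ∀ v, v ∈ S ∨ M v ∈ S) : S.ncard = q := by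
  classical
  have hMinj : Function.Injective M := by
    intro u v h
    rw [← hM2 u, h, hM2]
  set Sf := S.toFinset with hSf
  set Mf := Sf.image M with hMf
  have hMfc : Mf.card = Sf.card := Finset.card_image_of_injective _ hMinj
  have hdisj : Disjoint Sf Mf := by
    rw [Finset.disjoint_left]
    intro j hj hjM
    obtain ⟨j', hj', hj'eq⟩ := Finset.mem_image.mp hjM
    rw [hSf, Set.mem_toFinset] at hj hj'
    have hne' : j' ≠ j := hj'eq ▸ (hM1 j').ne
    exact hSind hj' hj hne' (hj'eq ▸ hM1 j')
  have huniv : Finset.univ = Sf ∪ Mf := by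
    apply Finset.Subset.antisymm _ (Finset.subset_univ _)
    intro v _
    rcases hcover v with h | h
    · exact Finset.mem_union_left _ (Set.mem_toFinset.mpr h)
    · refine Finset.mem_union_right _ ?_
      rw [hMf, Finset.mem_image]
      exact ⟨M v, Set.mem_toFinset.mpr h, hM2 v⟩
  have : Fintype.card V = Sf.card + Mf.card := by
    rw [← Finset.card_univ, huniv, Finset.card_union_of_disjoint hdisj]
  rw [Set.ncard_eq_toFinset_card', ← hSf]
  omega


end Indep

section Walks
variable {V : Type*} {G : SimpleGraph V} {es : List (Sym2 V)}


open SimpleGraph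

variable {V : Type*} {G : SimpleGraph V} {es : List (Sym2 V)}

/-- alternating odd walk: a `G`-edge, then alternately an `es`-edge and a `G`-edge. -/
def AWl (G : SimpleGraph V) (es : List (Sym2 V)) : V → V → List (V × V) → Prop
  | u, v, [] => G.Adj u v
  | u, v, (a, b) :: L => G.Adj u a ∧ s(a, b) ∈ es ∧ AWl G es b v L

lemma awl_nil {u v : V} : AWl G es u v [] ↔ G.Adj u v := Iff.rfl

lemma awl_cons {u v a b : V} {L : List (V × V)} :
    AWl G es u v ((a, b) :: L) ↔ G.Adj u a ∧ s(a, b) ∈ es ∧ AWl G es b v L := Iff.rfl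

lemma awl_append (L₁ : List (V × V)) {u v a b : V} {L₂ : List (V × V)} :
    AWl G es u v (L₁ ++ (a, b) :: L₂) ↔
      AWl G es u a L₁ ∧ s(a, b) ∈ es ∧ AWl G es b v L₂ := by
  induction L₁ generalizing u with
  | nil => simp [AWl]
  | cons z L ih =>
    obtain ⟨c, d⟩ := z
    rw [List.cons_append, awl_cons, awl_cons, ih]
    tauto

lemma awl_snoc {u y : V} {L : List (V × V)} (h : AWl G es u y L) {c z : V}
    (hm : s(y, c) ∈ es) (hz : G.Adj c z) : AWl G es u z (L ++ [(y, c)]) := by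
  induction L generalizing u with
  | nil => exact ⟨h, hm, hz⟩
  | cons w L ih =>
    obtain ⟨a, b⟩ := w
    obtain ⟨h1, h2, h3⟩ := h
    exact ⟨h1, h2, ih h3⟩

lemma awl_symm {u v : V} {L : List (V × V)} (h : AWl G es u v L) :
    ∃ L', AWl G es v u L' := by
  induction L generalizing u with
  | nil => exact ⟨[], h.symm⟩
  | cons z L ih =>
    obtain ⟨a, b⟩ := z
    obtain ⟨h1, h2, h3⟩ := h
    obtain ⟨L', hL'⟩ := ih h3
    exact ⟨L' ++ [(b, a)], awl_snoc hL' (Sym2.eq_swap ▸ h2) h1.symm⟩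

lemma awl_replaceLast {u x : V} {L : List (V × V)} (h : AWl G es u x L) :
    ∃ a, G.Adj a x ∧ ∀ z, G.Adj a z → ∃ L', AWl G es u z L' := by
  induction L generalizing u with
  | nil => exact ⟨u, h, fun z hz => ⟨[], hz⟩⟩
  | cons w L ih =>
    obtain ⟨c, d⟩ := w
    obtain ⟨h1, h2, h3⟩ := h
    obtain ⟨a, ha, hrep⟩ := ih h3
    refine ⟨a, ha, fun z hz => ?_⟩
    obtain ⟨L', hL'⟩ := hrep z hz
    exact ⟨(c, d) :: L', h1, h2, hL'⟩

lemma awl_qrev {w y : V} {L : List (V × V)} (h : AWl G es w y L) :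
    ∃ b, G.Adj b y ∧ ∀ (u : V) (L₁ : List (V × V)), AWl G es u b L₁ →
      ∃ L₂, AWl G es u w L₂ := by
  induction L generalizing w with
  | nil => exact ⟨w, h, fun u L₁ h₁ => ⟨L₁, h₁⟩⟩
  | cons z L ih =>
    obtain ⟨c, d⟩ := z
    obtain ⟨h1, h2, h3⟩ := h
    obtain ⟨b, hb, hext⟩ := ih h3
    refine ⟨b, hb, fun u L₁ h₁ => ?_⟩
    obtain ⟨L₂, hL₂⟩ := hext u L₁ h₁
    exact ⟨L₂ ++ [(d, c)], awl_snoc hL₂ (Sym2.eq_swap ▸ h2) h1.symm⟩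

lemma awl_mem {u v : V} {L : List (V × V)} (h : AWl G es u v L) :
    ∀ z ∈ L, s(z.1, z.2) ∈ es := by
  induction L generalizing u with
  | nil => intro z hz; simp at hz
  | cons w L ih =>
    obtain ⟨a, b⟩ := w
    obtain ⟨h1, h2, h3⟩ := h
    intro z hz
    rcases List.mem_cons.mp hz with heq | hz
    · subst heq; exact h2
    · exact ih h3 z hz

lemma awl_toWalk (hes : ∀ e ∈ es, e ∈ G.edgeSet) :
    ∀ (L : List (V × V)) (u v : V), AWl G es u v L →
    ∃ p : G.Walk u v, p.length = 2 * L.length + 1 ∧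
      (List.ofFn fun t : Fin L.length =>
        s(p.getVert (2 * ↑t + 1), p.getVert (2 * ↑t + 2))) =
        L.map (fun z => s(z.1, z.2)) := by
  intro L
  induction L with
  | nil =>
    intro u v h
    exact ⟨Walk.cons h Walk.nil, rfl, by simp⟩
  | cons z L ih =>
    obtain ⟨a, b⟩ := z
    intro u v h
    obtain ⟨h1, h2, h3⟩ := h
    obtain ⟨p', hlen, hofn⟩ := ih b v h3
    have hab : G.Adj a b := (G.mem_edgeSet).mp (hes _ h2)
    set p : G.Walk u v := Walk.cons h1 (Walk.cons hab p') with hp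
    have hsh : ∀ m, p.getVert (m + 2) = p'.getVert m := by
      intro m
      rw [hp, show m + 2 = m + 1 + 1 by omega, Walk.getVert_cons_succ,
        Walk.getVert_cons_succ]
    refine ⟨p, ?_, ?_⟩
    · simp only [hp, Walk.length_cons, hlen, List.length_cons]; ring
    · have e1 : p.getVert 1 = a := by
        rw [hp, show (1 : ℕ) = 0 + 1 by rfl, Walk.getVert_cons_succ, Walk.getVert_zero]
      have e2 : p.getVert 2 = b := by
        rw [show (2 : ℕ) = 0 + 2 by rfl, hsh, Walk.getVert_zero]
      have hfun : (fun i : Fin L.length =>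
          s(p.getVert (2 * ↑(i.succ) + 1), p.getVert (2 * ↑(i.succ) + 2))) =
          (fun i : Fin L.length => s(p'.getVert (2 * ↑i + 1), p'.getVert (2 * ↑i + 2))) := by
        funext i
        rw [Fin.val_succ, show 2 * (↑i + 1) + 1 = (2 * ↑i + 1) + 2 by ring,
          show 2 * (↑i + 1) + 2 = (2 * ↑i + 2) + 2 by ring, hsh, hsh]
      rw [List.map_cons, List.ofFn_succ, ← hofn, ← hfun]
      congr 1
      simp only [Fin.val_zero]
      norm_num
      rw [e1, e2]
      simp

lemma ec_of_awl (hes : ∀ e ∈ es, e ∈ G.edgeSet) {u v : V} {L : List (V × V)}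
    (h : AWl G es u v L) (hne : L ≠ [])
    (hle : (↑(L.map (fun z => s(z.1, z.2))) : Multiset (Sym2 V)) ≤ (↑es : Multiset (Sym2 V))) :
    EvenConnected G es u v := by
  obtain ⟨p, hlen, hofn⟩ := awl_toWalk hes L u v h
  refine ⟨p, L.length, ?_, hlen, ?_⟩
  · cases L with
    | nil => exact absurd rfl hne
    | cons z L => simp
  · rw [hofn]; exact hle

lemma awl_of_walk : ∀ (l : ℕ) {u v : V} (p : G.Walk u v), p.length = 2 * l + 1 →
    (∀ t : Fin l, s(p.getVert (2 * ↑t + 1), p.getVert (2 * ↑t + 2)) ∈ es) →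
    ∃ L, AWl G es u v L := by
  intro l
  induction l with
  | zero =>
    intro u v p hlen _
    cases p with
    | nil => simp at hlen
    | @cons _ w _ h q =>
      have hq : q.length = 0 := by
        rw [Walk.length_cons] at hlen; omega
      have h1 : q.getVert q.length = v := Walk.getVert_length q
      rw [hq, Walk.getVert_zero] at h1
      subst h1
      exact ⟨[], h⟩
  | succ l ih =>
    intro u v p hlen hmid
    cases p with
    | nil => simp at hlen
    | @cons _ a _ h1 q1 =>
      cases q1 with
      | nil =>
        rw [Walk.length_cons, Walk.length_nil] at hlen; omega
      | @cons _ b _ h2 q2 =>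
        rw [Walk.length_cons, Walk.length_cons] at hlen
        have hq2 : q2.length = 2 * l + 1 := by omega
        have hsh : ∀ m, (Walk.cons h1 (Walk.cons h2 q2)).getVert (m + 2) = q2.getVert m := by
          intro m
          rw [show m + 2 = m + 1 + 1 by omega, Walk.getVert_cons_succ, Walk.getVert_cons_succ]
        have h0 : s(a, b) ∈ es := by
          have := hmid ⟨0, Nat.succ_pos l⟩
          have e1 : (Walk.cons h1 (Walk.cons h2 q2)).getVert 1 = a := by
            rw [show (1 : ℕ) = 0 + 1 by rfl, Walk.getVert_cons_succ, Walk.getVert_zero]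
          have e2 : (Walk.cons h1 (Walk.cons h2 q2)).getVert 2 = b := by
            rw [show (2 : ℕ) = 0 + 2 by rfl, hsh, Walk.getVert_zero]
          simpa [e1, e2] using this
        have hmid2 : ∀ t : Fin l, s(q2.getVert (2 * ↑t + 1), q2.getVert (2 * ↑t + 2)) ∈ es := by
          intro t
          have := hmid ⟨t + 1, by omega⟩
          simp only at this
          rw [show 2 * (↑t + 1) + 1 = (2 * ↑t + 1) + 2 by ring,
            show 2 * (↑t + 1) + 2 = (2 * ↑t + 2) + 2 by ring, hsh, hsh] at this
          exact this
        obtain ⟨L, hL⟩ := ih q2 hq2 hmid2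
        exact ⟨(a, b) :: L, h1, h0, hL⟩

/-- every odd closed walk contains an odd cycle of no greater length -/
lemma exists_odd_cycle :
    ∀ (n : ℕ) {u : V} (w : G.Walk u u), Odd w.length → w.length ≤ n →
    ∃ (x : V) (c : G.Walk x x), c.IsCycle ∧ Odd c.length ∧ c.length ≤ w.length := by
  classical
  intro n
  induction n with
  | zero =>
    intro u w hodd hle
    rw [Nat.odd_iff] at hodd; omega
  | succ n ih =>
    intro u w hodd hle
    by_cases hnd : w.support.tail.Nodup
    · cases w with
      | nil => rw [Nat.odd_iff] at hodd; simp at hodd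
      | @cons _ b _ h p =>
        rw [Walk.support_cons, List.tail_cons] at hnd
        have hpath : p.IsPath := (Walk.isPath_def p).mpr hnd
        have hedge : s(u, b) ∉ p.edges := by
          intro hmem
          cases p with
          | nil => simp at hmem
          | @cons _ c _ h2 p2 =>
            rw [Walk.edges_cons, List.mem_cons] at hmem
            rcases hmem with heq | hmem
            · rw [Sym2.eq_iff] at heq
              rcases heq with ⟨rfl, rfl⟩ | ⟨rfl, -⟩
              · exact h.ne rfl
              · -- c = u, p2 : Walk u u
                cases p2 with
                | nil =>
                  -- whole walk has length 2, contradicting oddness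
                  rw [Nat.odd_iff] at hodd
                  simp [Walk.length_cons] at hodd
                | @cons _ d _ h3 p3 =>
                  have hu : u ∈ p3.support := Walk.end_mem_support p3
                  rw [Walk.support_cons, Walk.support_cons] at hnd
                  simp only [List.nodup_cons] at hnd
                  exact hnd.2.1 hu
            · have hb : b ∈ p2.support :=
                Walk.fst_mem_support_of_mem_edges p2 (Sym2.eq_swap ▸ hmem)
              rw [Walk.support_cons] at hnd
              simp only [List.nodup_cons] at hnd
              exact hnd.1 hb
        exact ⟨u, Walk.cons h p, (Walk.cons_isCycle_iff p h).mpr ⟨hpath, hedge⟩,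
          hodd, le_refl _⟩
    · cases w with
      | nil => simp at hnd
      | @cons _ b _ h₀ w₁ =>
        rw [Walk.support_cons, List.tail_cons] at hnd
        obtain ⟨x, hxdup⟩ := List.exists_duplicate_iff_not_nodup.mpr hnd
        have hx2 : 2 ≤ w₁.support.count x := List.duplicate_iff_two_le_count.mp hxdup
        have hxmem : x ∈ w₁.support := hxdup.mem
        set p₁ := w₁.takeUntil x hxmem with hp₁
        set p₂ := w₁.dropUntil x hxmem with hp₂
        have hspec : p₁.append p₂ = w₁ := Walk.take_spec w₁ hxmem
        have hcnt1 : p₁.support.count x = 1 := Walk.count_support_takeUntil_eq_one w₁ hxmem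
        have hxp₂ : x ∈ p₂.support.tail := by
          have : w₁.support.count x = p₁.support.count x + p₂.support.tail.count x := by
            rw [← hspec, Walk.support_append, List.count_append]
          rw [hcnt1] at this
          have : 1 ≤ p₂.support.tail.count x := by omega
          exact List.count_pos_iff.mp (by omega)
        cases hp2eq : p₂ with
        | nil => rw [hp2eq] at hxp₂; simp at hxp₂
        | @cons _ c _ h₂ p₃ =>
          have hxp₃ : x ∈ p₃.support := by
            rw [hp2eq, Walk.support_cons, List.tail_cons] at hxp₂
            exact hxp₂
          set p₄ := p₃.takeUntil x hxp₃ with hp₄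
          set p₅ := p₃.dropUntil x hxp₃ with hp₅
          have hspec2 : p₄.append p₅ = p₃ := Walk.take_spec p₃ hxp₃
          set C₁ : G.Walk x x := Walk.cons h₂ p₄ with hC₁
          set C₂ : G.Walk u u := Walk.cons h₀ (p₁.append p₅) with hC₂
          have hlensum : C₁.length + C₂.length = w₁.length + 1 := by
            have e2 : w₁.length = p₁.length + p₂.length := by
              rw [← hspec, Walk.length_append]
            have e3 : p₂.length = 1 + p₃.length := by
              rw [hp2eq, Walk.length_cons]; omega
            have e4 : p₃.length = p₄.length + p₅.length := by
              rw [← hspec2, Walk.length_append]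
            rw [hC₁, hC₂, Walk.length_cons, Walk.length_cons, Walk.length_append]
            omega
          rw [Walk.length_cons] at hodd hle ⊢
          have hodd' : Odd C₁.length ∨ Odd C₂.length := by
            simp only [Nat.odd_iff] at hodd ⊢
            omega
          have hC₁pos : 1 ≤ C₁.length := by rw [hC₁, Walk.length_cons]; omega
          have hC₂pos : 1 ≤ C₂.length := by rw [hC₂, Walk.length_cons]; omega
          rcases hodd' with ho | ho
          · obtain ⟨y, c, hc, hco, hcl⟩ := ih C₁ ho (by omega)
            exact ⟨y, c, hc, hco, by omega⟩
          · obtain ⟨y, c, hc, hco, hcl⟩ := ih C₂ ho (by omega)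
            exact ⟨y, c, hc, hco, by omega⟩

lemma two_occ [DecidableEq (Sym2 V)] {L : List (V × V)} {e : Sym2 V}
    (h : 2 ≤ (L.map (fun z => s(z.1, z.2))).count e) :
    ∃ (L₁ L₂ L₃ : List (V × V)) (z₁ z₂ : V × V),
      L = L₁ ++ z₁ :: (L₂ ++ z₂ :: L₃) ∧ s(z₁.1, z₁.2) = e ∧ s(z₂.1, z₂.2) = e := by
  classical
  have hmem : e ∈ L.map (fun z => s(z.1, z.2)) := by
    apply List.count_pos_iff.mp; omega
  obtain ⟨z, hzL, hze⟩ := List.mem_map.mp hmem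
  obtain ⟨A, B, rfl⟩ := List.append_of_mem hzL
  rw [List.map_append, List.map_cons, List.count_append, List.count_cons] at h
  rw [hze] at h
  simp only [beq_self_eq_true, if_true] at h
  by_cases hB : e ∈ B.map (fun z => s(z.1, z.2))
  · obtain ⟨z₂, hz₂, hz₂e⟩ := List.mem_map.mp hB
    obtain ⟨C, D, rfl⟩ := List.append_of_mem hz₂
    exact ⟨A, C, D, z, z₂, rfl, hze, hz₂e⟩
  · have hA : e ∈ A.map (fun z => s(z.1, z.2)) := by
      have h0 : (B.map (fun z => s(z.1, z.2))).count e = 0 :=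
        List.count_eq_zero_of_not_mem hB
      apply List.count_pos_iff.mp; omega
    obtain ⟨z₁, hz₁, hz₁e⟩ := List.mem_map.mp hA
    obtain ⟨C, D, rfl⟩ := List.append_of_mem hz₁
    refine ⟨C, D, B, z₁, z, ?_, hz₁e, hze⟩
    simp [List.append_assoc]

lemma awl_main {k : ℕ} (hk : 3 ≤ k)
    (hgirth : ∀ (u : V) (c : G.Walk u u), c.IsCycle → Odd c.length → 2 * k + 1 ≤ c.length)
    (hes : ∀ e ∈ es, e ∈ G.edgeSet) (hsk : es.length ≤ k - 2) :
    ∀ (n : ℕ) (L : List (V × V)) (u v : V), L.length ≤ n → AWl G es u v L →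
      (u = v → False) ∧ (u ≠ v → G.Adj u v ∨ EvenConnected G es u v) := by
  classical
  intro n
  induction n with
  | zero =>
    intro L u v hlen h
    have hL : L = [] := List.eq_nil_of_length_eq_zero (by omega)
    subst hL
    exact ⟨fun he => by subst he; exact G.irrefl h, fun _ => Or.inl h⟩
  | succ n ih =>
    intro L u v hlen h
    by_cases hle : (↑(L.map (fun z => s(z.1, z.2))) : Multiset (Sym2 V)) ≤
        (↑es : Multiset (Sym2 V))
    · constructor
      · rintro rfl
        obtain ⟨p, hplen, -⟩ := awl_toWalk hes L u u h
        have hcard : L.length ≤ es.length := by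
          have := Multiset.card_le_card hle
          simpa using this
        obtain ⟨x, c, hc, hco, hcl⟩ :=
          exists_odd_cycle p.length p (by rw [hplen]; exact ⟨L.length, by ring⟩) le_rfl
        have := hgirth x c hc hco
        omega
      · intro hne
        cases L with
        | nil => exact Or.inl h
        | cons z L' => exact Or.inr (ec_of_awl hes h (by simp) hle)
    · -- some es-edge is used at least twice in L
      have hex : ∃ e, ((↑es : Multiset (Sym2 V)).count e <
          ((↑(L.map (fun z => s(z.1, z.2))) : Multiset (Sym2 V))).count e) := by
        by_contra hc
        push_neg at hc
        exact hle (Multiset.le_iff_count.mpr fun e => hc e)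
      obtain ⟨e, he⟩ := hex
      rw [Multiset.coe_count, Multiset.coe_count] at he
      have hemem : e ∈ L.map (fun z => s(z.1, z.2)) := by
        apply List.count_pos_iff.mp; omega
      have heES : e ∈ es := by
        obtain ⟨z, hz, hze⟩ := List.mem_map.mp hemem
        exact hze ▸ awl_mem h z hz
      have hcnt2 : 2 ≤ (L.map (fun z => s(z.1, z.2))).count e := by
        have : 1 ≤ es.count e := List.count_pos_iff.mpr heES
        omega
      obtain ⟨L₁, L₂, L₃, z₁, z₂, hLeq, hz₁e, hz₂e⟩ := two_occ hcnt2
      subst hLeq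
      obtain ⟨a₁, b₁⟩ := z₁
      obtain ⟨a₂, b₂⟩ := z₂
      obtain ⟨hP, hm₁, hrest⟩ := (awl_append L₁).mp h
      obtain ⟨hmid, hm₂, htail⟩ := (awl_append L₂).mp hrest
      have hlen123 : L₁.length + L₂.length + L₃.length + 2 ≤ n + 1 := by
        simp only [List.length_append, List.length_cons] at hlen
        omega
      have hz12 : s(a₁, b₁) = s(a₂, b₂) := by rw [hz₁e, hz₂e]
      rw [Sym2.eq_iff] at hz12
      rcases hz12 with ⟨ha, hb⟩ | ⟨ha, hb⟩
      · -- same direction : splice out the loop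
        subst ha; subst hb
        have hnew : AWl G es u v (L₁ ++ (a₁, b₁) :: L₃) :=
          (awl_append L₁).mpr ⟨hP, hm₁, htail⟩
        exact ih (L₁ ++ (a₁, b₁) :: L₃) u v
          (by simp only [List.length_append, List.length_cons]; omega) hnew
      · -- opposite direction : the middle is an odd closed walk
        subst ha; subst hb
        exact ((ih L₂ b₁ b₁ (by omega) hmid).1 rfl).elim


end Walks

end EvenConnProof

open SimpleGraph EvenConnProof in
theorem evenConnection_graph_very_well_covered {V : Type*} [Fintype V] (G : SimpleGraph V)
    (hiso : ∀ v : V, ∃ w, G.Adj v w) (heven : Even (Fintype.card V))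
    (hvwc : VeryWellCovered G)
    (k : ℕ) (hk : 3 ≤ k)
    (hgirth : ∀ (u : V) (c : G.Walk u u), c.IsCycle → Odd c.length → 2 * k + 1 ≤ c.length)
    (es : List (Sym2 V)) (hes : ∀ e ∈ es, e ∈ G.edgeSet)
    (hs1 : 1 ≤ es.length) (hsk : es.length ≤ k - 2)
    (G' : SimpleGraph V)
    (hG' : G' = G ⊔ SimpleGraph.fromRel (fun u v => EvenConnected G es u v)) :
    VeryWellCovered G' := by
  classical
  subst hG'
  intro S' hS'max
  set q : ℕ := Fintype.card V / 2 with hq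
  have hq2 : Fintype.card V = 2 * q := by
    obtain ⟨m, hm⟩ := heven
    omega
  have hwc : ∀ s : Set V, Maximal (IsIndepSet' G) s → s.ncard = q := hvwc
  -- S' is independent in G
  have hSind : IsIndepSet' G S' := by
    intro a ha b hb hne hadj
    exact hS'max.prop ha hb hne ((sup_adj ..).mpr (Or.inl hadj))
  -- the matching and its properties
  obtain ⟨M, hM1, hM2⟩ := exists_matching hiso hwc hq2
  have hP2 : ∀ x a b, G.Adj a x → G.Adj b (M x) → a ≠ b → G.Adj a b :=
    matching_P2 hwc hq2 hM1 hM2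
  have htri : ∀ x a, G.Adj a x → G.Adj a (M x) → False := by
    intro x a h1 h2
    set w : G.Walk x x :=
      Walk.cons (hM1 x) (Walk.cons h2.symm (Walk.cons h1 Walk.nil)) with hw
    have hwl : w.length = 3 := by
      simp [hw, Walk.length_cons, Walk.length_nil]
    obtain ⟨y, c, hc, hco, hcl⟩ :=
      exists_odd_cycle w.length w (by rw [hwl]; exact ⟨1, by norm_num⟩) le_rfl
    have := hgirth y c hc hco
    omega
  -- G'-adjacency gives an alternating odd walk
  have hAdjAwl : ∀ a b : V,
      (G ⊔ SimpleGraph.fromRel (fun u v => EvenConnected G es u v)).Adj a b →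
      ∃ L, AWl G es a b L := by
    intro a b hab
    rw [sup_adj] at hab
    rcases hab with hab | hab
    · exact ⟨[], hab⟩
    · rw [fromRel_adj] at hab
      obtain ⟨hne, hec | hec⟩ := hab
      · obtain ⟨p, l, hl1, hlen, hmul⟩ := hec
        refine awl_of_walk l p hlen ?_
        intro t
        have hm : s(p.getVert (2 * ↑t + 1), p.getVert (2 * ↑t + 2)) ∈
            (List.ofFn fun t : Fin l =>
              s(p.getVert (2 * ↑t + 1), p.getVert (2 * ↑t + 2))) :=
          List.mem_ofFn.mpr ⟨t, rfl⟩
        have := Multiset.mem_of_le hmul (Multiset.mem_coe.mpr hm)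
        exact Multiset.mem_coe.mp this
      · obtain ⟨p, l, hl1, hlen, hmul⟩ := hec
        have hrev : ∃ L, AWl G es b a L := by
          refine awl_of_walk l p hlen ?_
          intro t
          have hm : s(p.getVert (2 * ↑t + 1), p.getVert (2 * ↑t + 2)) ∈
              (List.ofFn fun t : Fin l =>
                s(p.getVert (2 * ↑t + 1), p.getVert (2 * ↑t + 2))) :=
            List.mem_ofFn.mpr ⟨t, rfl⟩
          have := Multiset.mem_of_le hmul (Multiset.mem_coe.mpr hm)
          exact Multiset.mem_coe.mp this
        obtain ⟨L, hL⟩ := hrev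
        exact awl_symm hL
  -- the main walk lemma in terms of G'
  have hmain : ∀ u v (L : List (V × V)), AWl G es u v L →
      (u = v → False) ∧ (u ≠ v →
        (G ⊔ SimpleGraph.fromRel (fun u v => EvenConnected G es u v)).Adj u v) := by
    intro u v L hL
    have h := awl_main hk hgirth hes hsk L.length L u v le_rfl hL
    refine ⟨h.1, fun hne => ?_⟩
    rcases h.2 hne with h' | h'
    · exact (sup_adj ..).mpr (Or.inl h')
    · exact (sup_adj ..).mpr (Or.inr ((fromRel_adj ..).mpr ⟨hne, Or.inl h'⟩))
  -- S' contains at least one endpoint of every matching edge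
  have hget : ∀ z, z ∉ S' → ∃ u ∈ S',
      (G ⊔ SimpleGraph.fromRel (fun u v => EvenConnected G es u v)).Adj z u := by
    intro z hz
    by_contra hno
    push_neg at hno
    have hins : IsIndepSet'
        (G ⊔ SimpleGraph.fromRel (fun u v => EvenConnected G es u v)) (insert z S') := by
      intro a ha b hb hne
      rcases ha with rfl | ha <;> rcases hb with rfl | hb
      · exact absurd rfl hne
      · exact hno b hb
      · exact fun hadj => hno a ha hadj.symm
      · exact hS'max.prop ha hb hne
    exact hz (hS'max.2 hins (Set.subset_insert _ _) (Set.mem_insert _ _))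
  have hcover : ∀ x, x ∈ S' ∨ M x ∈ S' := by
    intro x
    by_contra hc
    push_neg at hc
    obtain ⟨hxn, hMxn⟩ := hc
    obtain ⟨u, huS, hu⟩ := hget x hxn
    obtain ⟨w, hwS, hw⟩ := hget (M x) hMxn
    obtain ⟨Lp, hLp⟩ := hAdjAwl u x hu.symm
    obtain ⟨Lq, hLq⟩ := hAdjAwl w (M x) hw.symm
    obtain ⟨a, hax, hrep⟩ := awl_replaceLast hLp
    obtain ⟨b, hby, hext⟩ := awl_qrev hLq
    by_cases hab : a = b
    · subst hab
      exact htri x a hax hby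
    · have haxb : G.Adj a b := hP2 x a b hax hby hab
      obtain ⟨L₁, hL₁⟩ := hrep b haxb
      obtain ⟨L₂, hL₂⟩ := hext u L₁ hL₁
      have hres := hmain u w L₂ hL₂
      by_cases huw : u = w
      · exact hres.1 huw
      · exact hS'max.prop huS hwS huw (hres.2 huw)
  exact half_count hq2 hM1 hM2 S' hSind hcover
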